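/- For fixed integer d ≥ 3, the function θ ↦ (θ/(d-2))·log((d+θ-2)/θ) is strictly increasing and strictly concave in θ on (0, ∞), and tends to 1 as θ → ∞. -/

import Mathlib

open Real Filter

/-- `θ ↦ (θ/(d-2))·log((d+θ-2)/θ)` is strictly increasing and strictly
concave on `(0,∞)`, and tends to `1` as `θ → ∞`. -/
theorem diffusion_detection_monotone_concave (d : ℕ) (hd : 3 ≤ d) :
    StrictMonoOn (fun θ : ℝ => (θ / ((d : ℝ) - 2)) * Real.log (((d : ℝ) + θ - 2) / θ))
      (Set.Ioi 0) ∧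
    StrictConcaveOn ℝ (Set.Ioi 0)
      (fun θ : ℝ => (θ / ((d : ℝ) - 2)) * Real.log (((d : ℝ) + θ - 2) / θ)) ∧
    Tendsto (fun θ : ℝ => (θ / ((d : ℝ) - 2)) * Real.log (((d : ℝ) + θ - 2) / θ))
      atTop (nhds 1) := by
  have hd3 : (3:ℝ) ≤ (d:ℝ) := by exact_mod_cast hd
  have hc : (0:ℝ) < (d:ℝ) - 2 := by linarith
  set c : ℝ := (d:ℝ) - 2 with hcdef
  have hfeq : (fun θ : ℝ => (θ / ((d : ℝ) - 2)) * Real.log (((d : ℝ) + θ - 2) / θ))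
      = fun θ : ℝ => (θ / c) * Real.log ((θ + c) / θ) := by
    funext θ
    have h1 : (d:ℝ) + θ - 2 = θ + c := by rw [hcdef]; ring
    rw [h1, hcdef]
  rw [hfeq]
  set f : ℝ → ℝ := fun θ => (θ / c) * Real.log ((θ + c) / θ) with hfdef
  set g : ℝ → ℝ := fun θ => (1/c) * Real.log ((θ+c)/θ) - 1/(θ+c) with hgdef
  -- first derivative
  have hderiv : ∀ θ : ℝ, 0 < θ → HasDerivAt f (g θ) θ := by
    intro θ hθ
    have hθc : 0 < θ + c := by linarith
    have h1 : HasDerivAt (fun x : ℝ => Real.log (x + c)) (1/(θ+c)) θ := by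
      have := (Real.hasDerivAt_log hθc.ne').comp θ ((hasDerivAt_id θ).add_const c)
      simpa [one_div, Function.comp_def] using this
    have h2 : HasDerivAt (fun x : ℝ => Real.log x) (1/θ) θ := by
      simpa [one_div] using Real.hasDerivAt_log hθ.ne'
    have h3 := h1.sub h2
    have h4 : HasDerivAt (fun x : ℝ => x / c) (1/c) θ := by
      simpa using (hasDerivAt_id θ).div_const c
    have h5 := h4.mul h3
    have heq : f =ᶠ[nhds θ] (fun x : ℝ => (x/c) * (Real.log (x+c) - Real.log x)) := by
      filter_upwards [eventually_gt_nhds hθ] with x hx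
      rw [hfdef]
      simp only
      rw [Real.log_div (by linarith) hx.ne']
    have h6 := h5.congr_of_eventuallyEq heq
    refine h6.congr_deriv ?_
    rw [hgdef]
    simp only [Pi.sub_apply]
    rw [Real.log_div hθc.ne' hθ.ne']
    field_simp
    ring
  -- second derivative
  have hderiv2 : ∀ θ : ℝ, 0 < θ →
      HasDerivAt g (-1/(θ*(θ+c)) + 1/(θ+c)^2) θ := by
    intro θ hθ
    have hθc : 0 < θ + c := by linarith
    have h1 : HasDerivAt (fun x : ℝ => Real.log (x + c)) (1/(θ+c)) θ := by
      have := (Real.hasDerivAt_log hθc.ne').comp θ ((hasDerivAt_id θ).add_const c)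
      simpa [one_div, Function.comp_def] using this
    have h2 : HasDerivAt (fun x : ℝ => Real.log x) (1/θ) θ := by
      simpa [one_div] using Real.hasDerivAt_log hθ.ne'
    have h3 := ((h1.sub h2).const_mul (1/c))
    have h4 : HasDerivAt (fun x : ℝ => 1/(x+c)) (-1/(θ+c)^2) θ := by
      have := ((hasDerivAt_id θ).add_const c).inv hθc.ne'
      simpa [one_div, pow_two, Pi.inv_def] using this
    have h5 := h3.sub h4
    have heq : g =ᶠ[nhds θ]
        (fun x : ℝ => (1/c) * (Real.log (x+c) - Real.log x) - 1/(x+c)) := by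
      filter_upwards [eventually_gt_nhds hθ] with x hx
      rw [hgdef]
      simp only
      rw [Real.log_div (by linarith) hx.ne']
    have h6 := h5.congr_of_eventuallyEq heq
    refine (h6.congr_deriv ?_)
    field_simp
    ring
  have hcont : ContinuousOn f (Set.Ioi 0) := fun θ hθ =>
    (hderiv θ hθ).differentiableAt.continuousAt.continuousWithinAt
  have hint : interior (Set.Ioi (0:ℝ)) = Set.Ioi 0 := interior_Ioi
  -- deriv f = g on Ioi 0
  have hdf : ∀ θ : ℝ, 0 < θ → deriv f θ = g θ := fun θ hθ => (hderiv θ hθ).deriv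
  constructor
  · -- strict mono
    apply strictMonoOn_of_deriv_pos (convex_Ioi 0) hcont
    intro θ hθ
    rw [hint] at hθ
    rw [hdf θ hθ]
    have hθc : 0 < θ + c := by linarith [Set.mem_Ioi.mp hθ]
    have hθ0 : (0:ℝ) < θ := hθ
    have hx : Real.log (θ/(θ+c)) < θ/(θ+c) - 1 := by
      apply Real.log_lt_sub_one_of_pos (div_pos hθ0 hθc)
      intro h
      have : θ = θ + c := by
        field_simp at h; linarith
      linarith
    have hlog : c/(θ+c) < Real.log ((θ+c)/θ) := by
      have h0 : Real.log ((θ+c)/θ) = - Real.log (θ/(θ+c)) := by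
        rw [← Real.log_inv, inv_div]
      have h2 : θ/(θ+c) - 1 = -(c/(θ+c)) := by field_simp; ring
      rw [h2] at hx
      rw [h0]
      linarith
    rw [hgdef]
    simp only
    have : 1/(θ+c) < (1/c) * Real.log ((θ+c)/θ) := by
      rw [div_lt_iff₀ hθc] at hlog ⊢
      calc 1 = (1/c) * c := by field_simp
      _ < (1/c) * (Real.log ((θ+c)/θ) * (θ+c)) := by
          apply mul_lt_mul_of_pos_left hlog (by positivity)
      _ = (1/c) * Real.log ((θ+c)/θ) * (θ+c) := by ring
    linarith
  constructor
  · -- strict concave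
    apply strictConcaveOn_of_deriv2_neg (convex_Ioi 0) hcont
    intro θ hθ
    rw [hint] at hθ
    have hθ0 : (0:ℝ) < θ := hθ
    have hθc : 0 < θ + c := by linarith
    have heq : deriv f =ᶠ[nhds θ] g := by
      filter_upwards [eventually_gt_nhds hθ0] with x hx using hdf x hx
    show deriv (deriv f) θ < 0
    rw [heq.deriv_eq, (hderiv2 θ hθ0).deriv]
    have h1 : 1/(θ+c)^2 < 1/(θ*(θ+c)) := by
      apply one_div_lt_one_div_of_lt (by positivity)
      have : θ < θ + c := by linarith
      calc θ * (θ+c) < (θ+c)*(θ+c) := by nlinarith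
      _ = (θ+c)^2 := by ring
    have : -1/(θ*(θ+c)) = -(1/(θ*(θ+c))) := by ring
    rw [this]
    linarith
  · -- limit
    have h1 := Real.tendsto_mul_log_one_add_div_atTop c
    have h2 : Tendsto (fun θ : ℝ => (1/c) * (θ * Real.log (1 + c/θ))) atTop (nhds ((1/c)*c)) :=
      h1.const_mul (1/c)
    have h3 : (1/c)*c = 1 := by field_simp
    rw [h3] at h2
    apply h2.congr'
    filter_upwards [eventually_gt_atTop (0:ℝ)] with θ hθ
    have : (θ + c)/θ = 1 + c/θ := by field_simp
    rw [hfdef]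
    simp only
    rw [this]
    ring
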